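/- Let r > 1/2. There exists a constant c > 0, depending only on r, such that for every τ ≥ 0 and all sequences α, β : ℤ → ℂ with ‖α‖_r < ∞ and ‖β‖_r < ∞, the sequence W : ℤ → ℂ defined by W_k = Σ_{k₁+k₂+k₃=k} ( conj(α_{k₁}) α_{k₂} α_{k₃} − conj(β_{k₁}) β_{k₂} β_{k₃} ) ∫₀^τ e^{2is k₁ k} ds (the inner sum over all (k₁,k₂,k₃) ∈ ℤ³ with k₁+k₂+k₃ = k converges absolutely) satisfies ‖W‖_r ≤ c τ (‖α‖_r + ‖β‖_r)² ‖α − β‖_r. (This is the Lipschitz estimate for the integral term J₁^τ of the second-order Fourier integrator, at the level of Fourier coefficients.) -/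

import Mathlib

/-- Weighted `H^r`-type norm of a sequence of Fourier coefficients. -/
noncomputable def wnorm (r : ℝ) (a : ℤ → ℂ) : ℝ :=
  Real.sqrt (∑' k : ℤ, (1 + |(k : ℝ)|) ^ (2 * r) * ‖a k‖ ^ 2)

open MeasureTheory
open scoped ENNReal

namespace Stmt10Aux

noncomputable def esqrt (x : ℝ≥0∞) : ℝ≥0∞ := x ^ (1/2 : ℝ)
lemma esqrt_sq (x : ℝ≥0∞) : esqrt (x ^ 2) = x := by
  rw [esqrt, ← ENNReal.rpow_natCast x 2, ← ENNReal.rpow_mul]; norm_num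
lemma sq_esqrt (x : ℝ≥0∞) : (esqrt x) ^ 2 = x := by
  rw [esqrt, ← ENNReal.rpow_natCast _ 2, ← ENNReal.rpow_mul]; norm_num
lemma esqrt_mul (x y : ℝ≥0∞) : esqrt (x * y) = esqrt x * esqrt y := by
  rw [esqrt, esqrt, esqrt, ENNReal.mul_rpow_of_nonneg _ _ (by norm_num)]
lemma esqrt_mono {x y : ℝ≥0∞} (h : x ≤ y) : esqrt x ≤ esqrt y :=
  ENNReal.rpow_le_rpow h (by norm_num)
lemma ecs {ι : Type*} [Countable ι] [MeasurableSpace ι] [MeasurableSingletonClass ι]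
    (f g : ι → ℝ≥0∞) :
    ∑' i, f i * g i ≤ esqrt (∑' i, f i ^ 2) * esqrt (∑' i, g i ^ 2) := by
  have hpq : (2:ℝ).HolderConjugate 2 := ⟨by norm_num, by norm_num, by norm_num⟩
  have h := ENNReal.lintegral_mul_le_Lp_mul_Lq (Measure.count : Measure ι) hpq
    (measurable_of_countable f).aemeasurable (measurable_of_countable g).aemeasurable
  simp only [Pi.mul_apply, lintegral_count] at h
  have h2 : ∀ x : ℝ≥0∞, x ^ (2:ℝ) = x ^ 2 := fun x => by
    rw [← ENNReal.rpow_natCast x 2]; norm_num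
  simpa [esqrt, h2] using h
lemma etri (f g : ℤ → ℝ≥0∞) :
    esqrt (∑' k, (f k + g k) ^ 2) ≤ esqrt (∑' k, f k ^ 2) + esqrt (∑' k, g k ^ 2) := by
  have h := ENNReal.lintegral_Lp_add_le (μ := (Measure.count : Measure ℤ))
    (measurable_of_countable f).aemeasurable (measurable_of_countable g).aemeasurable
    (p := 2) one_le_two
  simp only [Pi.add_apply, lintegral_count] at h
  have h2 : ∀ x : ℝ≥0∞, x ^ (2:ℝ) = x ^ 2 := fun x => by
    rw [← ENNReal.rpow_natCast x 2]; norm_num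
  simpa [esqrt, h2] using h

/-- `ℓ²` norm in `ℝ≥0∞`. -/
noncomputable def l2 (f : ℤ → ℝ≥0∞) : ℝ≥0∞ := esqrt (∑' k, f k ^ 2)

lemma l2_mono {f g : ℤ → ℝ≥0∞} (h : ∀ k, f k ≤ g k) : l2 f ≤ l2 g :=
  esqrt_mono (ENNReal.tsum_le_tsum fun k => pow_le_pow_left' (h k) 2)

lemma l2_add (f g : ℤ → ℝ≥0∞) : l2 (fun k => f k + g k) ≤ l2 f + l2 g := etri f g

lemma l2_smul (t : ℝ≥0∞) (f : ℤ → ℝ≥0∞) : l2 (fun k => t * f k) = t * l2 f := by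
  simp only [l2, mul_pow, ENNReal.tsum_mul_left, esqrt_mul, esqrt_sq]


lemma tsum_sub_left (h : ℤ → ℝ≥0∞) (m : ℤ) : (∑' a, h (m - a)) = ∑' a, h a :=
  (Equiv.subLeft m).tsum_eq h

lemma tsum_sub_right (h : ℤ → ℝ≥0∞) (m : ℤ) : (∑' a, h (a - m)) = ∑' a, h a :=
  (Equiv.subRight m).tsum_eq h

/-- Triple convolution. -/
noncomputable def conv3 (f g h : ℤ → ℝ≥0∞) (k : ℤ) : ℝ≥0∞ :=
  ∑' p : ℤ × ℤ, f p.1 * g p.2 * h (k - p.1 - p.2)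

lemma conv3_swap (f g h : ℤ → ℝ≥0∞) : conv3 f g h = conv3 g f h := by
  funext k
  rw [conv3, conv3, ← (Equiv.prodComm ℤ ℤ).tsum_eq]
  refine tsum_congr fun q => ?_
  simp only [Equiv.prodComm_apply, Prod.fst_swap, Prod.snd_swap]
  have : k - q.2 - q.1 = k - q.1 - q.2 := by ring
  rw [this]; ring

def rotEquiv (k : ℤ) : ℤ × ℤ ≃ ℤ × ℤ where
  toFun := fun q => (q.2, k - q.1 - q.2)
  invFun := fun p => (k - p.1 - p.2, p.1)
  left_inv := fun ⟨q1, q2⟩ => by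
    simp only [Prod.mk.injEq]
    exact ⟨by ring, trivial⟩
  right_inv := fun ⟨p1, p2⟩ => by
    simp only [Prod.mk.injEq]
    exact ⟨trivial, by ring⟩

lemma conv3_rot (f g h : ℤ → ℝ≥0∞) : conv3 f g h = conv3 h f g := by
  funext k
  rw [conv3, conv3, ← (rotEquiv k).tsum_eq (fun p => f p.1 * g p.2 * h (k - p.1 - p.2))]
  refine tsum_congr fun q => ?_
  show f q.2 * g (k - q.1 - q.2) * h (k - q.2 - (k - q.1 - q.2)) = h q.1 * f q.2 * g (k - q.1 - q.2)
  have : k - q.2 - (k - q.1 - q.2) = q.1 := by ring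
  rw [this]; ring

/-- Young's inequality `ℓ² * ℓ¹ * ℓ¹ → ℓ²` for triple convolutions. -/
lemma young (f g h : ℤ → ℝ≥0∞) :
    l2 (conv3 f g h) ≤ l2 f * (∑' k, g k) * (∑' k, h k) := by
  have hGH : ∀ k : ℤ, (∑' p : ℤ × ℤ, g p.2 * h (k - p.1 - p.2))
      = (∑' k, g k) * (∑' k, h k) := by
    intro k
    rw [ENNReal.tsum_prod (f := fun a b => g b * h (k - a - b)), ENNReal.tsum_comm]
    calc ∑' (b : ℤ) (a : ℤ), g b * h (k - a - b)
        = ∑' b : ℤ, g b * ∑' a : ℤ, h (k - b - a) := by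
          refine tsum_congr fun b => ?_
          rw [ENNReal.tsum_mul_left]
          congr 1
          refine tsum_congr fun a => ?_
          have : k - a - b = k - b - a := by ring
          rw [this]
      _ = (∑' k, g k) * (∑' k, h k) := by
          simp_rw [tsum_sub_left h]
          rw [ENNReal.tsum_mul_right]
  have hpt : ∀ k : ℤ, (conv3 f g h k) ^ 2 ≤
      (∑' p : ℤ × ℤ, f p.1 ^ 2 * g p.2 * h (k - p.1 - p.2)) *
        ((∑' k, g k) * (∑' k, h k)) := by
    intro k
    have hcs := ecs (fun p : ℤ × ℤ => f p.1 * esqrt (g p.2 * h (k - p.1 - p.2)))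
      (fun p : ℤ × ℤ => esqrt (g p.2 * h (k - p.1 - p.2)))
    have heq : conv3 f g h k
        = ∑' p : ℤ × ℤ, (f p.1 * esqrt (g p.2 * h (k - p.1 - p.2))) *
            esqrt (g p.2 * h (k - p.1 - p.2)) := by
      refine tsum_congr fun p => ?_
      conv_rhs => rw [mul_assoc, ← sq, sq_esqrt]
      rw [mul_assoc]
    have e1 : (∑' p : ℤ × ℤ, (f p.1 * esqrt (g p.2 * h (k - p.1 - p.2))) ^ 2)
        = ∑' p : ℤ × ℤ, f p.1 ^ 2 * g p.2 * h (k - p.1 - p.2) := by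
      refine tsum_congr fun p => ?_
      rw [mul_pow, sq_esqrt, ← mul_assoc]
    have e2 : (∑' p : ℤ × ℤ, esqrt (g p.2 * h (k - p.1 - p.2)) ^ 2)
        = (∑' k, g k) * (∑' k, h k) := by
      rw [← hGH k]
      exact tsum_congr fun p => sq_esqrt _
    rw [heq]
    refine le_trans (pow_le_pow_left' hcs 2) ?_
    rw [mul_pow, sq_esqrt, sq_esqrt, e1, e2]
  have hsum : (∑' k : ℤ, ∑' p : ℤ × ℤ, f p.1 ^ 2 * g p.2 * h (k - p.1 - p.2))
      = (∑' k, f k ^ 2) * (∑' k, g k) * (∑' k, h k) := by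
    rw [ENNReal.tsum_comm]
    calc ∑' (p : ℤ × ℤ) (k : ℤ), f p.1 ^ 2 * g p.2 * h (k - p.1 - p.2)
        = ∑' (p : ℤ × ℤ), f p.1 ^ 2 * g p.2 * (∑' k, h k) := by
          refine tsum_congr fun p => ?_
          rw [ENNReal.tsum_mul_left]
          congr 1
          rw [← tsum_sub_right h (p.1 + p.2)]
          refine tsum_congr fun k => ?_
          have : k - p.1 - p.2 = k - (p.1 + p.2) := by ring
          rw [this]
      _ = (∑' k, f k ^ 2) * (∑' k, g k) * (∑' k, h k) := by
          rw [ENNReal.tsum_prod (f := fun a b => f a ^ 2 * g b * (∑' k, h k))]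
          simp_rw [ENNReal.tsum_mul_right, ENNReal.tsum_mul_left]
          rw [ENNReal.tsum_mul_right]
  calc l2 (conv3 f g h)
      ≤ esqrt ((∑' k, f k ^ 2) * (∑' k, g k) * (∑' k, h k) * ((∑' k, g k) * (∑' k, h k))) := by
        refine esqrt_mono ?_
        refine le_trans (ENNReal.tsum_le_tsum hpt) ?_
        rw [ENNReal.tsum_mul_right, hsum]
    _ = l2 f * (∑' k, g k) * (∑' k, h k) := by
        have : (∑' k, f k ^ 2) * (∑' k, g k) * (∑' k, h k) * ((∑' k, g k) * (∑' k, h k))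
            = (∑' k, f k ^ 2) * ((∑' k, g k) ^ 2) * ((∑' k, h k) ^ 2) := by ring
        rw [this, esqrt_mul, esqrt_mul, esqrt_sq, esqrt_sq, l2]

/-! ### Real-side helper lemmas -/

lemma summable_inv_weight {r : ℝ} (hr : 1 / 2 < r) :
    Summable (fun k : ℤ => ((1 + |(k : ℝ)|) ^ (2 * r))⁻¹) := by
  have hN : Summable (fun n : ℕ => ((1 + |((n : ℤ) : ℝ)|) ^ (2 * r))⁻¹) := by
    have h1 : Summable (fun n : ℕ => ((n : ℝ)) ^ (-(2 * r))) :=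
      Real.summable_nat_rpow.2 (by linarith)
    have h2 : Summable (fun n : ℕ => (((n + 1 : ℕ) : ℝ)) ^ (-(2 * r))) :=
      (summable_nat_add_iff 1).2 h1
    refine h2.congr fun n => ?_
    have hpos : (0 : ℝ) ≤ ((n + 1 : ℕ) : ℝ) := by positivity
    rw [Real.rpow_neg hpos]
    congr 2
    push_cast
    rw [abs_of_nonneg (by positivity : (0:ℝ) ≤ (n:ℝ))]
    ring
  refine Summable.of_nat_of_neg hN ?_
  refine hN.congr fun n => ?_
  congr 3
  push_cast
  rw [abs_neg]

lemma l1_of_l2w {r : ℝ} (hr : 1 / 2 < r) {x : ℤ → ℝ} (hx0 : ∀ k, 0 ≤ x k)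
    (hx : Summable (fun k : ℤ => (1 + |(k : ℝ)|) ^ (2 * r) * x k ^ 2)) : Summable x := by
  refine Summable.of_nonneg_of_le hx0 (fun k => ?_) (hx.add (summable_inv_weight hr))
  set w := (1 + |(k : ℝ)|) ^ (2 * r) with hw
  have hwpos : 0 < w := by
    rw [hw]; positivity
  rw [← mul_le_mul_iff_right₀ hwpos]
  have h1 : w * (w * x k ^ 2 + w⁻¹) = (w * x k) ^ 2 + 1 := by
    field_simp
  rw [h1]
  nlinarith [sq_nonneg (w * x k - 1), mul_nonneg hwpos.le (hx0 k)]

lemma wbd {r : ℝ} (hr0 : 0 ≤ r) (x y z : ℝ) :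
    (1 + |x + y + z|) ^ r ≤ 3 ^ r * ((1 + |x|) ^ r + (1 + |y|) ^ r + (1 + |z|) ^ r) := by
  set m := max (1 + |x|) (max (1 + |y|) (1 + |z|)) with hm
  have hmx : 1 + |x| ≤ m := le_max_left _ _
  have hmy : 1 + |y| ≤ m := le_trans (le_max_left _ _) (le_max_right _ _)
  have hmz : 1 + |z| ≤ m := le_trans (le_max_right _ _) (le_max_right _ _)
  have h1 : 1 + |x + y + z| ≤ 3 * m := by
    have := abs_add_le (x + y) z
    have := abs_add_le x y
    linarith
  have h0 : (0 : ℝ) ≤ 1 + |x + y + z| := by positivity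
  have h2 : (1 + |x + y + z|) ^ r ≤ (3 * m) ^ r := Real.rpow_le_rpow h0 h1 hr0
  have hm0 : (0 : ℝ) ≤ m := le_trans (by positivity) hmx
  rw [Real.mul_rpow (by norm_num) hm0] at h2
  refine h2.trans ?_
  have hmr : m ^ r ≤ (1 + |x|) ^ r + (1 + |y|) ^ r + (1 + |z|) ^ r := by
    have hy' : (0:ℝ) ≤ (1 + |y|) ^ r := by positivity
    have hz' : (0:ℝ) ≤ (1 + |z|) ^ r := by positivity
    have hx' : (0:ℝ) ≤ (1 + |x|) ^ r := by positivity
    rcases max_cases (1 + |x|) (max (1 + |y|) (1 + |z|)) with ⟨h, _⟩ | ⟨h, _⟩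
    · rw [hm, h]; linarith
    · rcases max_cases (1 + |y|) (1 + |z|) with ⟨h', _⟩ | ⟨h', _⟩
      · rw [hm, h, h']; linarith
      · rw [hm, h, h']; linarith
  have h3 : (0:ℝ) ≤ (3:ℝ) ^ r := by positivity
  exact mul_le_mul_of_nonneg_left hmr h3

lemma ofReal_tsum_le {ι : Type*} {f : ι → ℝ} (hf : ∀ i, 0 ≤ f i) :
    ENNReal.ofReal (∑' i, f i) ≤ ∑' i, ENNReal.ofReal (f i) := by
  by_cases h : Summable f
  · rw [ENNReal.ofReal_tsum_of_nonneg hf h]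
  · rw [tsum_eq_zero_of_not_summable h]
    simp

lemma tsum_le_of_ofReal {ι : Type*} {f : ι → ℝ} (hf : ∀ i, 0 ≤ f i) {M : ℝ} (hM : 0 ≤ M)
    (h : ∑' i, ENNReal.ofReal (f i) ≤ ENNReal.ofReal M) : ∑' i, f i ≤ M := by
  by_cases hs : Summable f
  · rw [← ENNReal.ofReal_tsum_of_nonneg hf hs] at h
    rwa [ENNReal.ofReal_le_ofReal_iff hM] at h
  · rw [tsum_eq_zero_of_not_summable hs]
    exact hM

lemma tri_bound (a1 a2 a3 b1 b2 b3 : ℂ) :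
    ‖(starRingEnd ℂ) a1 * a2 * a3 - (starRingEnd ℂ) b1 * b2 * b3‖ ≤
      ‖a1 - b1‖ * ‖a2‖ * ‖a3‖
      + ‖b1‖ * ‖a2 - b2‖ * ‖a3‖
      + ‖b1‖ * ‖b2‖ * ‖a3 - b3‖ := by
  have key : (starRingEnd ℂ) a1 * a2 * a3 - (starRingEnd ℂ) b1 * b2 * b3
      = (starRingEnd ℂ) (a1 - b1) * a2 * a3 + (starRingEnd ℂ) b1 * (a2 - b2) * a3
        + (starRingEnd ℂ) b1 * b2 * (a3 - b3) := by
    simp only [map_sub, mul_sub, sub_mul]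
    ring
  rw [key]
  refine le_trans (norm_add_le _ _) ?_
  refine le_trans (add_le_add_left (norm_add_le _ _) _) ?_
  simp only [norm_mul, Complex.norm_conj]
  exact le_rfl

lemma int_bound {τ : ℝ} (hτ : 0 ≤ τ) (m : ℤ) :
    ‖∫ s in (0 : ℝ)..τ, Complex.exp (2 * Complex.I * s * ((m : ℤ) : ℂ))‖ ≤ τ := by
  have h := intervalIntegral.norm_integral_le_of_norm_le_const (C := 1)
    (f := fun s : ℝ => Complex.exp (2 * Complex.I * s * ((m : ℤ) : ℂ))) (a := (0:ℝ)) (b := τ)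
    (fun x _ => by
      rw [Complex.norm_exp]
      have : (2 * Complex.I * x * ((m : ℤ) : ℂ)).re = 0 := by
        simp [Complex.mul_re, Complex.mul_im]
      rw [this, Real.exp_zero])
  simpa [abs_of_nonneg hτ] using h

lemma summable_prod3 {x y z : ℤ → ℝ} (hx0 : ∀ k, 0 ≤ x k) (hy0 : ∀ k, 0 ≤ y k)
    (hz0 : ∀ k, 0 ≤ z k) (hx : Summable x) (hy : Summable y) (hz : Summable z) (k : ℤ) :
    Summable (fun p : ℤ × ℤ => x p.1 * y p.2 * z (k - p.1 - p.2)) := by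
  have hxy : Summable (fun p : ℤ × ℤ => x p.1 * y p.2) :=
    hx.mul_of_nonneg hy hx0 hy0
  refine Summable.of_nonneg_of_le
    (fun p => mul_nonneg (mul_nonneg (hx0 p.1) (hy0 p.2)) (hz0 _)) (fun p => ?_)
    (hxy.mul_right (∑' j, z j))
  exact mul_le_mul_of_nonneg_left (Summable.le_tsum hz _ (fun j _ => hz0 j))
    (mul_nonneg (hx0 p.1) (hy0 p.2))

lemma esqrt_ofReal {X : ℝ} (hX : 0 ≤ X) :
    esqrt (ENNReal.ofReal X) = ENNReal.ofReal (Real.sqrt X) := by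
  rw [esqrt, ENNReal.ofReal_rpow_of_nonneg hX (by norm_num), Real.sqrt_eq_rpow]

lemma conv3_weight {vv : ℤ → ℝ≥0∞} {e3 : ℝ≥0∞} {k : ℤ}
    (hv : ∀ p1 p2 : ℤ, vv k ≤ e3 * (vv p1 + vv p2 + vv (k - p1 - p2)))
    (f g h : ℤ → ℝ≥0∞) :
    vv k * conv3 f g h k ≤
      e3 * (conv3 (fun j => vv j * f j) g h k + conv3 f (fun j => vv j * g j) h k
        + conv3 f g (fun j => vv j * h j) k) := by
  rw [conv3, ← ENNReal.tsum_mul_left]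
  calc (∑' p : ℤ × ℤ, vv k * (f p.1 * g p.2 * h (k - p.1 - p.2)))
      ≤ ∑' p : ℤ × ℤ, e3 * ((vv p.1 * f p.1) * g p.2 * h (k - p.1 - p.2)
          + f p.1 * (vv p.2 * g p.2) * h (k - p.1 - p.2)
          + f p.1 * g p.2 * (vv (k - p.1 - p.2) * h (k - p.1 - p.2))) := by
        refine ENNReal.tsum_le_tsum fun p => ?_
        calc vv k * (f p.1 * g p.2 * h (k - p.1 - p.2))
            ≤ (e3 * (vv p.1 + vv p.2 + vv (k - p.1 - p.2)))
                * (f p.1 * g p.2 * h (k - p.1 - p.2)) :=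
              mul_le_mul_left (hv p.1 p.2) _
          _ = e3 * ((vv p.1 * f p.1) * g p.2 * h (k - p.1 - p.2)
              + f p.1 * (vv p.2 * g p.2) * h (k - p.1 - p.2)
              + f p.1 * g p.2 * (vv (k - p.1 - p.2) * h (k - p.1 - p.2))) := by ring
    _ = e3 * (conv3 (fun j => vv j * f j) g h k + conv3 f (fun j => vv j * g j) h k
        + conv3 f g (fun j => vv j * h j) k) := by
        rw [ENNReal.tsum_mul_left]
        congr 1
        rw [conv3, conv3, conv3, ← ENNReal.tsum_add, ← ENNReal.tsum_add]

lemma l2_sq (f : ℤ → ℝ≥0∞) : (l2 f) ^ 2 = ∑' k, f k ^ 2 := sq_esqrt _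

lemma rpow_sq {x r : ℝ} (hx : 0 ≤ x) : (x ^ r) ^ 2 = x ^ (2 * r) := by
  rw [← Real.rpow_natCast (x ^ r) 2, ← Real.rpow_mul hx]
  norm_num [mul_comm]

lemma l2_add3 (f g h : ℤ → ℝ≥0∞) :
    l2 (fun k => f k + g k + h k) ≤ l2 f + l2 g + l2 h :=
  le_trans (l2_add (fun k => f k + g k) h) (add_le_add_left (l2_add f g) _)

lemma l2_add9 (f1 f2 f3 f4 f5 f6 f7 f8 f9 : ℤ → ℝ≥0∞) :
    l2 (fun k => (f1 k + f2 k + f3 k) + (f4 k + f5 k + f6 k) + (f7 k + f8 k + f9 k))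
      ≤ (l2 f1 + l2 f2 + l2 f3) + (l2 f4 + l2 f5 + l2 f6) + (l2 f7 + l2 f8 + l2 f9) :=
  le_trans (l2_add3 (fun k => f1 k + f2 k + f3 k) (fun k => f4 k + f5 k + f6 k)
      (fun k => f7 k + f8 k + f9 k))
    (add_le_add (add_le_add (l2_add3 f1 f2 f3) (l2_add3 f4 f5 f6)) (l2_add3 f7 f8 f9))

lemma l2_weighted_eq {r : ℝ} (γ : ℤ → ℂ)
    (hs : Summable (fun k : ℤ => (1 + |(k : ℝ)|) ^ (2 * r) * ‖γ k‖ ^ 2)) :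
    l2 (fun k => ENNReal.ofReal ((1 + |(k : ℝ)|) ^ r) * ENNReal.ofReal (‖γ k‖))
      = ENNReal.ofReal
          (Real.sqrt (∑' k : ℤ, (1 + |(k : ℝ)|) ^ (2 * r) * ‖γ k‖ ^ 2)) := by
  rw [l2, ← esqrt_ofReal (tsum_nonneg (fun k => by positivity))]
  congr 1
  rw [ENNReal.ofReal_tsum_of_nonneg (fun k => by positivity) hs]
  refine tsum_congr fun k => ?_
  have hx : (0 : ℝ) ≤ 1 + |(k : ℝ)| := by positivity
  rw [mul_pow, ← ENNReal.ofReal_pow (by positivity), ← ENNReal.ofReal_pow (norm_nonneg _),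
    rpow_sq hx, ← ENNReal.ofReal_mul (by positivity)]

end Stmt10Aux

open Stmt10Aux in
theorem stmt10 (r : ℝ) (hr : 1 / 2 < r) :
    ∃ c > 0, ∀ τ : ℝ, 0 ≤ τ → ∀ α β : ℤ → ℂ,
      Summable (fun k : ℤ => (1 + |(k : ℝ)|) ^ (2 * r) * ‖α k‖ ^ 2) →
      Summable (fun k : ℤ => (1 + |(k : ℝ)|) ^ (2 * r) * ‖β k‖ ^ 2) →
      (∀ k : ℤ, Summable (fun p : ℤ × ℤ =>
        ‖((starRingEnd ℂ) (α p.1) * α p.2 * α (k - p.1 - p.2)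
            - (starRingEnd ℂ) (β p.1) * β p.2 * β (k - p.1 - p.2)) *
          ∫ s in (0 : ℝ)..τ, Complex.exp (2 * Complex.I * s * ((p.1 * k : ℤ) : ℂ))‖)) ∧
      wnorm r (fun k : ℤ => ∑' p : ℤ × ℤ,
          ((starRingEnd ℂ) (α p.1) * α p.2 * α (k - p.1 - p.2)
            - (starRingEnd ℂ) (β p.1) * β p.2 * β (k - p.1 - p.2)) *
          ∫ s in (0 : ℝ)..τ, Complex.exp (2 * Complex.I * s * ((p.1 * k : ℤ) : ℂ)))
        ≤ c * τ * (wnorm r α + wnorm r β) ^ 2 * wnorm r (fun k => α k - β k) := by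
  classical
  have hr0 : (0 : ℝ) ≤ r := by linarith
  have hS : Summable (fun k : ℤ => ((1 + |(k : ℝ)|) ^ (2 * r))⁻¹) := summable_inv_weight hr
  set S : ℝ := ∑' k : ℤ, ((1 + |(k : ℝ)|) ^ (2 * r))⁻¹ with hSdef
  have hS1 : (1 : ℝ) ≤ S := by
    have h0 := Summable.le_tsum hS 0 (fun j _ => by positivity)
    simpa using h0
  have hS0 : (0 : ℝ) ≤ S := by linarith
  have h3r : (0 : ℝ) < 3 ^ r := Real.rpow_pos_of_pos (by norm_num) r
  refine ⟨9 * 3 ^ r * S, by nlinarith, ?_⟩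
  intro τ hτ α β hα hβ
  have habs : ∀ z : ℂ, 0 ≤ ‖z‖ := fun z => norm_nonneg z
  -- ℓ¹ summability of the coefficient sequences
  have hAl1 : Summable (fun k : ℤ => ‖α k‖) :=
    l1_of_l2w hr (fun k => habs _) hα
  have hBl1 : Summable (fun k : ℤ => ‖β k‖) :=
    l1_of_l2w hr (fun k => habs _) hβ
  have hDsum : Summable (fun k : ℤ => (1 + |(k : ℝ)|) ^ (2 * r) * ‖α k - β k‖ ^ 2) := by
    refine Summable.of_nonneg_of_le (fun k => by positivity) (fun k => ?_)
      ((hα.mul_left 2).add (hβ.mul_left 2))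
    have h1 : ‖α k - β k‖ ≤ ‖α k‖ + ‖β k‖ := by
      exact norm_sub_le _ _
    have hw : (0 : ℝ) ≤ (1 + |(k : ℝ)|) ^ (2 * r) := by positivity
    have h2 : ‖α k - β k‖ ^ 2 ≤
        2 * ‖α k‖ ^ 2 + 2 * ‖β k‖ ^ 2 := by
      nlinarith [habs (α k - β k), habs (α k), habs (β k),
        sq_nonneg (‖α k‖ - ‖β k‖)]
    calc (1 + |(k : ℝ)|) ^ (2 * r) * ‖α k - β k‖ ^ 2
        ≤ (1 + |(k : ℝ)|) ^ (2 * r) *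
            (2 * ‖α k‖ ^ 2 + 2 * ‖β k‖ ^ 2) :=
          mul_le_mul_of_nonneg_left h2 hw
      _ = 2 * ((1 + |(k : ℝ)|) ^ (2 * r) * ‖α k‖ ^ 2)
          + 2 * ((1 + |(k : ℝ)|) ^ (2 * r) * ‖β k‖ ^ 2) := by ring
  have hDl1 : Summable (fun k : ℤ => ‖α k - β k‖) :=
    l1_of_l2w hr (fun k => habs _) hDsum
  -- the real comparison sequence
  set φ : ℤ → ℤ × ℤ → ℝ := fun k p =>
    ‖α p.1 - β p.1‖ * ‖α p.2‖ * ‖α (k - p.1 - p.2)‖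
    + ‖β p.1‖ * ‖α p.2 - β p.2‖ * ‖α (k - p.1 - p.2)‖
    + ‖β p.1‖ * ‖β p.2‖ *
        ‖α (k - p.1 - p.2) - β (k - p.1 - p.2)‖ with hφdef
  have hφ0 : ∀ k p, 0 ≤ φ k p := by
    intro k p
    rw [hφdef]
    have t1 : 0 ≤ ‖α p.1 - β p.1‖ * ‖α p.2‖ *
        ‖α (k - p.1 - p.2)‖ := mul_nonneg (mul_nonneg (habs _) (habs _)) (habs _)
    have t2 : 0 ≤ ‖β p.1‖ * ‖α p.2 - β p.2‖ *
        ‖α (k - p.1 - p.2)‖ := mul_nonneg (mul_nonneg (habs _) (habs _)) (habs _)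
    have t3 : 0 ≤ ‖β p.1‖ * ‖β p.2‖ *
        ‖α (k - p.1 - p.2) - β (k - p.1 - p.2)‖ :=
      mul_nonneg (mul_nonneg (habs _) (habs _)) (habs _)
    exact add_nonneg (add_nonneg t1 t2) t3
  have hφsum : ∀ k : ℤ, Summable (φ k) := by
    intro k
    rw [hφdef]
    exact ((summable_prod3 (fun j => habs _) (fun j => habs _) (fun j => habs _)
        hDl1 hAl1 hAl1 k).add
      (summable_prod3 (fun j => habs _) (fun j => habs _) (fun j => habs _)
        hBl1 hDl1 hAl1 k)).add
      (summable_prod3 (fun j => habs _) (fun j => habs _) (fun j => habs _)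
        hBl1 hBl1 hDl1 k)
  have htri : ∀ (k : ℤ) (p : ℤ × ℤ),
      ‖((starRingEnd ℂ) (α p.1) * α p.2 * α (k - p.1 - p.2)
          - (starRingEnd ℂ) (β p.1) * β p.2 * β (k - p.1 - p.2)) *
        ∫ s in (0 : ℝ)..τ, Complex.exp (2 * Complex.I * s * ((p.1 * k : ℤ) : ℂ))‖
      ≤ τ * φ k p := by
    intro k p
    rw [norm_mul]
    have hb := tri_bound (α p.1) (α p.2) (α (k - p.1 - p.2)) (β p.1) (β p.2) (β (k - p.1 - p.2))
    have hint := int_bound hτ (p.1 * k)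
    calc ‖(starRingEnd ℂ) (α p.1) * α p.2 * α (k - p.1 - p.2)
          - (starRingEnd ℂ) (β p.1) * β p.2 * β (k - p.1 - p.2)‖ *
          ‖∫ s in (0 : ℝ)..τ, Complex.exp (2 * Complex.I * s * ((p.1 * k : ℤ) : ℂ))‖
        ≤ φ k p * τ := by
          refine mul_le_mul ?_ hint (habs _) (hφ0 k p)
          rw [hφdef]
          exact hb
      _ = τ * φ k p := mul_comm _ _
  have hsumk : ∀ k : ℤ, Summable (fun p : ℤ × ℤ =>
      ‖((starRingEnd ℂ) (α p.1) * α p.2 * α (k - p.1 - p.2)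
          - (starRingEnd ℂ) (β p.1) * β p.2 * β (k - p.1 - p.2)) *
        ∫ s in (0 : ℝ)..τ, Complex.exp (2 * Complex.I * s * ((p.1 * k : ℤ) : ℂ))‖) := by
    intro k
    exact Summable.of_nonneg_of_le (fun p => habs _) (htri k) ((hφsum k).mul_left τ)
  refine ⟨hsumk, ?_⟩
  -- ENNReal-side setup
  set Na := wnorm r α with hNadef
  set Nb := wnorm r β with hNbdef
  set Nd := wnorm r (fun k => α k - β k) with hNddef
  have hNa0 : 0 ≤ Na := Real.sqrt_nonneg _
  have hNb0 : 0 ≤ Nb := Real.sqrt_nonneg _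
  have hNd0 : 0 ≤ Nd := Real.sqrt_nonneg _
  set vv : ℤ → ℝ≥0∞ := fun k => ENNReal.ofReal ((1 + |(k : ℝ)|) ^ r) with hvvdef
  set aE : ℤ → ℝ≥0∞ := fun k => ENNReal.ofReal (‖α k‖) with haEdef
  set bE : ℤ → ℝ≥0∞ := fun k => ENNReal.ofReal (‖β k‖) with hbEdef
  set dE : ℤ → ℝ≥0∞ := fun k => ENNReal.ofReal (‖α k - β k‖) with hdEdef
  set CrE : ℝ≥0∞ := ENNReal.ofReal (Real.sqrt S) with hCrEdef
  set e3 : ℝ≥0∞ := ENNReal.ofReal (3 ^ r) with he3def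
  set M : ℝ≥0∞ := ENNReal.ofReal Na + ENNReal.ofReal Nb with hMdef
  set Ld : ℝ≥0∞ := ENNReal.ofReal Nd with hLddef
  have hvbase : ∀ k : ℤ, (0 : ℝ) < (1 + |(k : ℝ)|) ^ r :=
    fun k => Real.rpow_pos_of_pos (by positivity) r
  have hvv0 : ∀ k, vv k ≠ 0 := fun k => by
    simp only [hvvdef]; exact (ENNReal.ofReal_pos.2 (hvbase k)).ne'
  have hvvtop : ∀ k, vv k ≠ ⊤ := fun k => by
    simp only [hvvdef]; exact ENNReal.ofReal_ne_top
  have hCr_sq : (∑' k : ℤ, ((vv k)⁻¹) ^ 2) = ENNReal.ofReal S := by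
    rw [hSdef, ENNReal.ofReal_tsum_of_nonneg (fun k => by positivity) hS]
    refine tsum_congr fun k => ?_
    simp only [hvvdef]
    rw [← ENNReal.ofReal_inv_of_pos (hvbase k), ← ENNReal.ofReal_pow (by positivity),
      inv_pow, rpow_sq (by positivity : (0:ℝ) ≤ 1 + |(k : ℝ)|)]
  have hCrE : esqrt (∑' k : ℤ, ((vv k)⁻¹) ^ 2) = CrE := by
    rw [hCr_sq, esqrt_ofReal hS0, hCrEdef]
  have hl1 : ∀ x : ℤ → ℝ≥0∞, (∑' k, x k) ≤ CrE * l2 (fun k => vv k * x k) := by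
    intro x
    have h1 : (∑' k, x k) = ∑' k, (vv k)⁻¹ * (vv k * x k) := by
      refine tsum_congr fun k => ?_
      rw [← mul_assoc, ENNReal.inv_mul_cancel (hvv0 k) (hvvtop k), one_mul]
    rw [h1, ← hCrE]
    exact ecs _ _
  have hLa : l2 (fun k => vv k * aE k) = ENNReal.ofReal Na := by
    simp only [hvvdef, haEdef, hNadef, wnorm]
    exact l2_weighted_eq α hα
  have hLb : l2 (fun k => vv k * bE k) = ENNReal.ofReal Nb := by
    simp only [hvvdef, hbEdef, hNbdef, wnorm]
    exact l2_weighted_eq β hβ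
  have hLd2 : l2 (fun k => vv k * dE k) = Ld := by
    simp only [hvvdef, hdEdef, hLddef, hNddef, wnorm]
    exact l2_weighted_eq (fun k => α k - β k) hDsum
  have hSa : (∑' k, aE k) ≤ CrE * M := by
    refine (hl1 aE).trans ?_
    rw [hLa, hMdef]
    exact mul_le_mul_right le_self_add _
  have hSb : (∑' k, bE k) ≤ CrE * M := by
    refine (hl1 bE).trans ?_
    rw [hLb, hMdef]
    exact mul_le_mul_right le_add_self _
  have hSd : (∑' k, dE k) ≤ CrE * Ld := by
    refine (hl1 dE).trans ?_
    rw [hLd2]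
  have hLaM : l2 (fun k => vv k * aE k) ≤ M := by rw [hLa, hMdef]; exact le_self_add
  have hLbM : l2 (fun k => vv k * bE k) ≤ M := by rw [hLb, hMdef]; exact le_add_self
  -- pointwise weight inequality
  have hvk : ∀ k p1 p2 : ℤ, vv k ≤ e3 * (vv p1 + vv p2 + vv (k - p1 - p2)) := by
    intro k p1 p2
    have hw := wbd hr0 ((p1 : ℤ) : ℝ) ((p2 : ℤ) : ℝ) (((k - p1 - p2 : ℤ) : ℝ))
    have hk : ((p1 : ℝ) + (p2 : ℝ) + ((k - p1 - p2 : ℤ) : ℝ)) = (k : ℝ) := by push_cast; ring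
    rw [hk] at hw
    simp only [hvvdef, he3def]
    calc ENNReal.ofReal ((1 + |(k : ℝ)|) ^ r)
        ≤ ENNReal.ofReal (3 ^ r * ((1 + |((p1 : ℤ) : ℝ)|) ^ r + (1 + |((p2 : ℤ) : ℝ)|) ^ r
            + (1 + |((k - p1 - p2 : ℤ) : ℝ)|) ^ r)) := ENNReal.ofReal_le_ofReal hw
      _ = _ := by
          rw [ENNReal.ofReal_mul (by positivity),
            ENNReal.ofReal_add (by positivity) (by positivity),
            ENNReal.ofReal_add (by positivity) (by positivity)]
  set cE : ℤ → ℝ≥0∞ := fun k => conv3 dE aE aE k + conv3 bE dE aE k + conv3 bE bE dE k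
    with hcEdef
  have habsW : ∀ k : ℤ, ‖∑' p : ℤ × ℤ,
      ((starRingEnd ℂ) (α p.1) * α p.2 * α (k - p.1 - p.2)
        - (starRingEnd ℂ) (β p.1) * β p.2 * β (k - p.1 - p.2)) *
      ∫ s in (0 : ℝ)..τ, Complex.exp (2 * Complex.I * s * ((p.1 * k : ℤ) : ℂ))‖
      ≤ τ * ∑' p : ℤ × ℤ, φ k p := by
    intro k
    calc ‖∑' p : ℤ × ℤ, ((starRingEnd ℂ) (α p.1) * α p.2 * α (k - p.1 - p.2)
          - (starRingEnd ℂ) (β p.1) * β p.2 * β (k - p.1 - p.2)) *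
          ∫ s in (0 : ℝ)..τ, Complex.exp (2 * Complex.I * s * ((p.1 * k : ℤ) : ℂ))‖
        ≤ ∑' p : ℤ × ℤ, ‖((starRingEnd ℂ) (α p.1) * α p.2 * α (k - p.1 - p.2)
          - (starRingEnd ℂ) (β p.1) * β p.2 * β (k - p.1 - p.2)) *
          ∫ s in (0 : ℝ)..τ, Complex.exp (2 * Complex.I * s * ((p.1 * k : ℤ) : ℂ))‖ :=
          norm_tsum_le_tsum_norm (hsumk k)
      _ = ∑' p : ℤ × ℤ, ‖((starRingEnd ℂ) (α p.1) * α p.2 * α (k - p.1 - p.2)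
          - (starRingEnd ℂ) (β p.1) * β p.2 * β (k - p.1 - p.2)) *
          ∫ s in (0 : ℝ)..τ, Complex.exp (2 * Complex.I * s * ((p.1 * k : ℤ) : ℂ))‖ := by
          rfl
      _ ≤ ∑' p : ℤ × ℤ, τ * φ k p :=
          Summable.tsum_le_tsum (htri k) (hsumk k) ((hφsum k).mul_left τ)
      _ = τ * ∑' p : ℤ × ℤ, φ k p := tsum_mul_left
  have hcE : ∀ k : ℤ, (∑' p : ℤ × ℤ, ENNReal.ofReal (φ k p)) = cE k := by
    intro k
    simp only [hφdef, hcEdef, haEdef, hbEdef, hdEdef, conv3]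
    rw [← ENNReal.tsum_add, ← ENNReal.tsum_add]
    refine tsum_congr fun p => ?_
    rw [ENNReal.ofReal_add (add_nonneg (mul_nonneg (mul_nonneg (habs _) (habs _)) (habs _))
        (mul_nonneg (mul_nonneg (habs _) (habs _)) (habs _)))
        (mul_nonneg (mul_nonneg (habs _) (habs _)) (habs _)),
      ENNReal.ofReal_add (mul_nonneg (mul_nonneg (habs _) (habs _)) (habs _))
        (mul_nonneg (mul_nonneg (habs _) (habs _)) (habs _)),
      ENNReal.ofReal_mul (mul_nonneg (habs _) (habs _)), ENNReal.ofReal_mul (habs _),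
      ENNReal.ofReal_mul (mul_nonneg (habs _) (habs _)), ENNReal.ofReal_mul (habs _),
      ENNReal.ofReal_mul (mul_nonneg (habs _) (habs _)), ENNReal.ofReal_mul (habs _)]
  have hofW : ∀ k : ℤ, ENNReal.ofReal (‖∑' p : ℤ × ℤ,
      ((starRingEnd ℂ) (α p.1) * α p.2 * α (k - p.1 - p.2)
        - (starRingEnd ℂ) (β p.1) * β p.2 * β (k - p.1 - p.2)) *
      ∫ s in (0 : ℝ)..τ, Complex.exp (2 * Complex.I * s * ((p.1 * k : ℤ) : ℂ))‖)
      ≤ ENNReal.ofReal τ * cE k := by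
    intro k
    refine le_trans (ENNReal.ofReal_le_ofReal (habsW k)) ?_
    rw [ENNReal.ofReal_mul hτ]
    exact mul_le_mul_right ((ofReal_tsum_le (fun p => hφ0 k p)).trans (le_of_eq (hcE k))) _
  set Φ : ℤ → ℝ≥0∞ := fun k =>
    (conv3 (fun j => vv j * dE j) aE aE k + conv3 dE (fun j => vv j * aE j) aE k
      + conv3 dE aE (fun j => vv j * aE j) k)
    + (conv3 (fun j => vv j * bE j) dE aE k + conv3 bE (fun j => vv j * dE j) aE k
      + conv3 bE dE (fun j => vv j * aE j) k)
    + (conv3 (fun j => vv j * bE j) bE dE k + conv3 bE (fun j => vv j * bE j) dE k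
      + conv3 bE bE (fun j => vv j * dE j) k) with hPhidef
  have hstep : ∀ k : ℤ, vv k * cE k ≤ e3 * Φ k := by
    intro k
    have w1 := conv3_weight (fun p1 p2 => hvk k p1 p2) dE aE aE
    have w2 := conv3_weight (fun p1 p2 => hvk k p1 p2) bE dE aE
    have w3 := conv3_weight (fun p1 p2 => hvk k p1 p2) bE bE dE
    refine le_trans (le_of_eq ?_) (le_trans (add_le_add (add_le_add w1 w2) w3) (le_of_eq ?_))
    · simp only [hcEdef]; ring
    · simp only [hPhidef]; ring
  have hΦb : l2 Φ ≤ 9 * (CrE ^ 2 * M ^ 2 * Ld) := by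
    have t1 : l2 (conv3 (fun j => vv j * dE j) aE aE) ≤ Ld * (CrE * M) * (CrE * M) := by
      refine le_trans (young _ _ _) ?_
      rw [hLd2]
      exact mul_le_mul' (mul_le_mul' le_rfl hSa) hSa
    have t2 : l2 (conv3 dE (fun j => vv j * aE j) aE) ≤ M * (CrE * Ld) * (CrE * M) := by
      rw [conv3_swap]
      exact le_trans (young _ _ _) (mul_le_mul' (mul_le_mul' hLaM hSd) hSa)
    have t3 : l2 (conv3 dE aE (fun j => vv j * aE j)) ≤ M * (CrE * Ld) * (CrE * M) := by
      rw [conv3_rot dE aE]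
      exact le_trans (young _ _ _) (mul_le_mul' (mul_le_mul' hLaM hSd) hSa)
    have t4 : l2 (conv3 (fun j => vv j * bE j) dE aE) ≤ M * (CrE * Ld) * (CrE * M) :=
      le_trans (young _ _ _) (mul_le_mul' (mul_le_mul' hLbM hSd) hSa)
    have t5 : l2 (conv3 bE (fun j => vv j * dE j) aE) ≤ Ld * (CrE * M) * (CrE * M) := by
      rw [conv3_swap]
      exact le_trans (young _ _ _) (mul_le_mul' (mul_le_mul' (le_of_eq hLd2) hSb) hSa)
    have t6 : l2 (conv3 bE dE (fun j => vv j * aE j)) ≤ M * (CrE * M) * (CrE * Ld) := by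
      rw [conv3_rot bE dE]
      exact le_trans (young _ _ _) (mul_le_mul' (mul_le_mul' hLaM hSb) hSd)
    have t7 : l2 (conv3 (fun j => vv j * bE j) bE dE) ≤ M * (CrE * M) * (CrE * Ld) :=
      le_trans (young _ _ _) (mul_le_mul' (mul_le_mul' hLbM hSb) hSd)
    have t8 : l2 (conv3 bE (fun j => vv j * bE j) dE) ≤ M * (CrE * M) * (CrE * Ld) := by
      rw [conv3_swap]
      exact le_trans (young _ _ _) (mul_le_mul' (mul_le_mul' hLbM hSb) hSd)
    have t9 : l2 (conv3 bE bE (fun j => vv j * dE j)) ≤ Ld * (CrE * M) * (CrE * M) := by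
      rw [conv3_rot bE bE]
      exact le_trans (young _ _ _) (mul_le_mul' (mul_le_mul' (le_of_eq hLd2) hSb) hSb)
    calc l2 Φ
        ≤ (l2 (conv3 (fun j => vv j * dE j) aE aE) + l2 (conv3 dE (fun j => vv j * aE j) aE)
            + l2 (conv3 dE aE (fun j => vv j * aE j)))
          + (l2 (conv3 (fun j => vv j * bE j) dE aE) + l2 (conv3 bE (fun j => vv j * dE j) aE)
            + l2 (conv3 bE dE (fun j => vv j * aE j)))
          + (l2 (conv3 (fun j => vv j * bE j) bE dE) + l2 (conv3 bE (fun j => vv j * bE j) dE)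
            + l2 (conv3 bE bE (fun j => vv j * dE j))) := by
          rw [hPhidef]
          exact l2_add9 _ _ _ _ _ _ _ _ _
      _ ≤ (Ld * (CrE * M) * (CrE * M) + M * (CrE * Ld) * (CrE * M) + M * (CrE * Ld) * (CrE * M))
          + (M * (CrE * Ld) * (CrE * M) + Ld * (CrE * M) * (CrE * M) + M * (CrE * M) * (CrE * Ld))
          + (M * (CrE * M) * (CrE * Ld) + M * (CrE * M) * (CrE * Ld)
            + Ld * (CrE * M) * (CrE * M)) :=
          add_le_add (add_le_add (add_le_add (add_le_add t1 t2) t3)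
            (add_le_add (add_le_add t4 t5) t6)) (add_le_add (add_le_add t7 t8) t9)
      _ = 9 * (CrE ^ 2 * M ^ 2 * Ld) := by ring
  have hL2main : l2 (fun k => vv k * cE k) ≤ e3 * (9 * (CrE ^ 2 * M ^ 2 * Ld)) :=
    le_trans (l2_mono hstep) (by rw [l2_smul]; exact mul_le_mul_right hΦb e3)
  -- final chain
  have keyE : (∑' k : ℤ, ENNReal.ofReal ((1 + |(k : ℝ)|) ^ (2 * r) *
      ‖∑' p : ℤ × ℤ,
        ((starRingEnd ℂ) (α p.1) * α p.2 * α (k - p.1 - p.2)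
          - (starRingEnd ℂ) (β p.1) * β p.2 * β (k - p.1 - p.2)) *
        ∫ s in (0 : ℝ)..τ, Complex.exp (2 * Complex.I * s * ((p.1 * k : ℤ) : ℂ))‖ ^ 2))
      ≤ ENNReal.ofReal ((9 * 3 ^ r * S * τ * (Na + Nb) ^ 2 * Nd) ^ 2) := by
    calc (∑' k : ℤ, ENNReal.ofReal ((1 + |(k : ℝ)|) ^ (2 * r) *
        ‖∑' p : ℤ × ℤ,
          ((starRingEnd ℂ) (α p.1) * α p.2 * α (k - p.1 - p.2)
            - (starRingEnd ℂ) (β p.1) * β p.2 * β (k - p.1 - p.2)) *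
          ∫ s in (0 : ℝ)..τ, Complex.exp (2 * Complex.I * s * ((p.1 * k : ℤ) : ℂ))‖ ^ 2))
        = ∑' k : ℤ, vv k ^ 2 * (ENNReal.ofReal (‖∑' p : ℤ × ℤ,
            ((starRingEnd ℂ) (α p.1) * α p.2 * α (k - p.1 - p.2)
              - (starRingEnd ℂ) (β p.1) * β p.2 * β (k - p.1 - p.2)) *
            ∫ s in (0 : ℝ)..τ, Complex.exp (2 * Complex.I * s * ((p.1 * k : ℤ) : ℂ))‖)) ^ 2 := by
          refine tsum_congr fun k => ?_
          rw [ENNReal.ofReal_mul (by positivity), ENNReal.ofReal_pow (habs _)]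
          congr 1
          simp only [hvvdef]
          rw [← ENNReal.ofReal_pow (by positivity),
            rpow_sq (by positivity : (0:ℝ) ≤ 1 + |(k : ℝ)|)]
      _ ≤ ∑' k : ℤ, vv k ^ 2 * (ENNReal.ofReal τ * cE k) ^ 2 :=
          ENNReal.tsum_le_tsum fun k => mul_le_mul_right (pow_le_pow_left' (hofW k) 2) _
      _ = (ENNReal.ofReal τ) ^ 2 * ∑' k : ℤ, (vv k * cE k) ^ 2 := by
          rw [← ENNReal.tsum_mul_left]
          exact tsum_congr fun k => by ring
      _ = (ENNReal.ofReal τ) ^ 2 * (l2 (fun k => vv k * cE k)) ^ 2 := by rw [l2_sq]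
      _ ≤ (ENNReal.ofReal τ) ^ 2 * (e3 * (9 * (CrE ^ 2 * M ^ 2 * Ld))) ^ 2 :=
          mul_le_mul_right (pow_le_pow_left' hL2main 2) _
      _ = ENNReal.ofReal ((9 * 3 ^ r * S * τ * (Na + Nb) ^ 2 * Nd) ^ 2) := by
          have e1 : CrE ^ 2 = ENNReal.ofReal S := by
            rw [hCrEdef, ← ENNReal.ofReal_pow (Real.sqrt_nonneg S), Real.sq_sqrt hS0]
          have e2 : M ^ 2 = ENNReal.ofReal ((Na + Nb) ^ 2) := by
            rw [hMdef, ← ENNReal.ofReal_add hNa0 hNb0,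
              ← ENNReal.ofReal_pow (by positivity)]
          have h9 : (9 : ℝ≥0∞) = ENNReal.ofReal (9 : ℝ) := by simp
          have hbase : (0:ℝ) ≤ 3 ^ r * (9 * (S * (Na + Nb) ^ 2 * Nd)) :=
            mul_nonneg h3r.le (mul_nonneg (by norm_num)
              (mul_nonneg (mul_nonneg hS0 (sq_nonneg _)) hNd0))
          rw [e1, e2, hLddef, he3def, h9, ← ENNReal.ofReal_mul hS0,
            ← ENNReal.ofReal_mul (mul_nonneg hS0 (sq_nonneg _)),
            ← ENNReal.ofReal_mul (by norm_num : (0:ℝ) ≤ 9),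
            ← ENNReal.ofReal_mul h3r.le,
            ← ENNReal.ofReal_pow hbase, ← ENNReal.ofReal_pow hτ,
            ← ENNReal.ofReal_mul (sq_nonneg τ)]
          congr 1
          ring
  have main_real : (∑' k : ℤ, (1 + |(k : ℝ)|) ^ (2 * r) *
      ‖∑' p : ℤ × ℤ,
        ((starRingEnd ℂ) (α p.1) * α p.2 * α (k - p.1 - p.2)
          - (starRingEnd ℂ) (β p.1) * β p.2 * β (k - p.1 - p.2)) *
        ∫ s in (0 : ℝ)..τ, Complex.exp (2 * Complex.I * s * ((p.1 * k : ℤ) : ℂ))‖ ^ 2)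
      ≤ (9 * 3 ^ r * S * τ * (Na + Nb) ^ 2 * Nd) ^ 2 :=
    tsum_le_of_ofReal (fun k => by positivity) (sq_nonneg _) keyE
  have hRHS0 : 0 ≤ 9 * 3 ^ r * S * τ * (Na + Nb) ^ 2 * Nd :=
    mul_nonneg (mul_nonneg (mul_nonneg (mul_nonneg (mul_nonneg (by norm_num) h3r.le) hS0) hτ)
      (sq_nonneg _)) hNd0
  calc wnorm r (fun k : ℤ => ∑' p : ℤ × ℤ,
        ((starRingEnd ℂ) (α p.1) * α p.2 * α (k - p.1 - p.2)
          - (starRingEnd ℂ) (β p.1) * β p.2 * β (k - p.1 - p.2)) *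
        ∫ s in (0 : ℝ)..τ, Complex.exp (2 * Complex.I * s * ((p.1 * k : ℤ) : ℂ)))
      = Real.sqrt (∑' k : ℤ, (1 + |(k : ℝ)|) ^ (2 * r) *
          ‖∑' p : ℤ × ℤ,
            ((starRingEnd ℂ) (α p.1) * α p.2 * α (k - p.1 - p.2)
              - (starRingEnd ℂ) (β p.1) * β p.2 * β (k - p.1 - p.2)) *
            ∫ s in (0 : ℝ)..τ, Complex.exp (2 * Complex.I * s * ((p.1 * k : ℤ) : ℂ))‖ ^ 2) := by
        simp only [wnorm]
    _ ≤ Real.sqrt ((9 * 3 ^ r * S * τ * (Na + Nb) ^ 2 * Nd) ^ 2) := Real.sqrt_le_sqrt main_real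
    _ = 9 * 3 ^ r * S * τ * (Na + Nb) ^ 2 * Nd := Real.sqrt_sq hRHS0
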